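/- Every outer-1-planar graph is proper conflict-free (degree+3)-choosable: for any list assignment L with |L(v)| = d(v) + 3 for every vertex v, there exists a proper conflict-free L-coloring. Moreover the bound is sharp, since C5 (which is outer-1-planar) is not proper conflict-free (degree+2)-choosable. -/

import Mathlib

/-- A proper conflict-free coloring of `G`. -/
def IsPCF {V β : Type*} (G : SimpleGraph V) (φ : V → β) : Prop :=
  (∀ ⦃a b : V⦄, G.Adj a b → φ a ≠ φ b) ∧
  ∀ v : V, (∃ u, G.Adj v u) → ∃ c : β, ∃! u : V, G.Adj v u ∧ φ u = c

/-- A proper conflict-free coloring from the lists `L`. -/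
def IsPCFList {V : Type*} (G : SimpleGraph V) (L : V → Finset ℕ) (φ : V → ℕ) : Prop :=
  (∀ v, φ v ∈ L v) ∧ IsPCF G φ

/-- With the vertices placed on a circle at positions `p` (listed along the circle),
the chords `e` and `f` cross with the endpoints of `e` and `f` interleaving as
`a < c < b < d`. -/
def ChordCross {V : Type*} (p : V → ℕ) (e f : Sym2 V) : Prop :=
  ∃ a b c d : V, e = s(a, b) ∧ f = s(c, d) ∧ p a < p c ∧ p c < p b ∧ p b < p d

/-- The chords `e, f` cross: their endpoints interleave along the circle. -/
def Crosses {V : Type*} (p : V → ℕ) (e f : Sym2 V) : Prop :=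
  ChordCross p e f ∨ ChordCross p f e

/-- `G` is outer-1-planar: it has a drawing with all vertices on the outer face
(i.e. on a circle, edges drawn as chords) in which every edge is crossed at most
once. -/
def OuterOnePlanar {V : Type*} (G : SimpleGraph V) : Prop :=
  ∃ p : V → ℕ, Function.Injective p ∧
    ∀ e ∈ G.edgeSet, {f | f ∈ G.edgeSet ∧ Crosses p e f}.Subsingleton

/-- The cycle on `n` vertices, as a graph on `ZMod n`. -/
def Cyc (n : ℕ) : SimpleGraph (ZMod n) :=
  SimpleGraph.fromRel (fun a b => a - b = 1)

instance : DecidableRel (Cyc 5).Adj := fun a b =>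
  decidable_of_iff (a ≠ b ∧ (a - b = 1 ∨ b - a = 1)) (by
    simp [Cyc, SimpleGraph.fromRel_adj])

-- Greedy coloring from a good order
section Greedy
set_option linter.unusedSectionVars false
open Finset Function
variable {V : Type} [Fintype V] [DecidableEq V]

noncomputable def minNbr (G : SimpleGraph V) [DecidableRel G.Adj] (ρ : V → ℕ) (v : V) : V :=
  if h : (G.neighborFinset v).Nonempty then
    (Finset.exists_min_image (G.neighborFinset v) ρ h).choose
  else v

lemma minNbr_mem (G : SimpleGraph V) [DecidableRel G.Adj] (ρ : V → ℕ) {v : V}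
    (h : (G.neighborFinset v).Nonempty) : minNbr G ρ v ∈ G.neighborFinset v := by
  rw [minNbr, dif_pos h]
  exact (Finset.exists_min_image (G.neighborFinset v) ρ h).choose_spec.1

lemma minNbr_le (G : SimpleGraph V) [DecidableRel G.Adj] (ρ : V → ℕ) {v u : V}
    (hu : u ∈ G.neighborFinset v) : ρ (minNbr G ρ v) ≤ ρ u := by
  have h : (G.neighborFinset v).Nonempty := ⟨u, hu⟩
  rw [minNbr, dif_pos h]
  exact (Finset.exists_min_image (G.neighborFinset v) ρ h).choose_spec.2 u hu

/-- The "unique minimizer" characterization. -/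
lemma minNbr_eq (G : SimpleGraph V) [DecidableRel G.Adj] (ρ : V → ℕ) (hρ : Injective ρ) {v m : V}
    (hm : m ∈ G.neighborFinset v) (hmin : ∀ u ∈ G.neighborFinset v, ρ m ≤ ρ u) :
    minNbr G ρ v = m := by
  have h : (G.neighborFinset v).Nonempty := ⟨m, hm⟩
  apply hρ
  exact le_antisymm (minNbr_le G ρ hm) (hmin _ (minNbr_mem G ρ h))

noncomputable def Dset (G : SimpleGraph V) [DecidableRel G.Adj] (ρ : V → ℕ) (u : V) : Finset V :=
  ((G.neighborFinset u).filter (fun x => ρ x < ρ u)) ∪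
    (((G.neighborFinset u).image (minNbr G ρ)).erase u)

lemma mem_Dset_back (G : SimpleGraph V) [DecidableRel G.Adj] (ρ : V → ℕ) {u x : V}
    (hab : G.Adj u x) (h : ρ x < ρ u) : x ∈ Dset G ρ u :=
  Finset.mem_union_left _ (Finset.mem_filter.2 ⟨(SimpleGraph.mem_neighborFinset _ _ _).2 hab, h⟩)

lemma minNbr_mem_Dset (G : SimpleGraph V) [DecidableRel G.Adj] (ρ : V → ℕ) {u v : V}
    (hvu : G.Adj u v) (hne : minNbr G ρ v ≠ u) : minNbr G ρ v ∈ Dset G ρ u :=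
  Finset.mem_union_right _ (Finset.mem_erase.2 ⟨hne,
    Finset.mem_image.2 ⟨v, (SimpleGraph.mem_neighborFinset _ _ _).2 hvu, rfl⟩⟩)

lemma mem_Dset_lt (G : SimpleGraph V) [DecidableRel G.Adj] (ρ : V → ℕ) (hρ : Injective ρ)
    {u x : V} (hx : x ∈ Dset G ρ u) : ρ x < ρ u := by
  rcases Finset.mem_union.1 hx with h | h
  · exact (Finset.mem_filter.1 h).2
  · obtain ⟨hne, himg⟩ := Finset.mem_erase.1 h
    obtain ⟨v, hv, rfl⟩ := Finset.mem_image.1 himg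
    have h1 : ρ (minNbr G ρ v) ≤ ρ u :=
      minNbr_le G ρ ((SimpleGraph.mem_neighborFinset _ _ _).2 ((SimpleGraph.mem_neighborFinset _ _ _ |>.1 hv).symm))
    exact lt_of_le_of_ne h1 (fun h => hne (hρ h))

theorem greedy (G : SimpleGraph V) [DecidableRel G.Adj]
    (ρ : V → ℕ) (hρ : Function.Injective ρ)
    (hgood : ∀ u, (Dset G ρ u).card ≤ G.degree u + 2)
    (L : V → Finset ℕ) (hL : ∀ v, G.degree v + 3 ≤ (L v).card) :
    ∃ φ : V → ℕ, IsPCFList G L φ := by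
  classical
  have hwf : WellFounded (fun a b : V => ρ a < ρ b) := InvImage.wf ρ Nat.lt_wfRel.wf
  have hne' : ∀ (u : V) (g : {x // x ∈ Dset G ρ u} → ℕ),
      ((L u) \ (Dset G ρ u).attach.image g).Nonempty := by
    intro u g
    have h1 : ((Dset G ρ u).attach.image g).card ≤ G.degree u + 2 := by
      calc ((Dset G ρ u).attach.image g).card ≤ (Dset G ρ u).attach.card := Finset.card_image_le
        _ = (Dset G ρ u).card := Finset.card_attach
        _ ≤ G.degree u + 2 := hgood u
    have h2 := hL u
    have h3 := Finset.le_card_sdiff ((Dset G ρ u).attach.image g) (L u)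
    rw [← Finset.card_pos]
    omega
  set φ : V → ℕ := hwf.fix (fun u ih =>
    ((L u) \ (Dset G ρ u).attach.image (fun x => ih x.1 (mem_Dset_lt G ρ hρ x.2))).min'
      (hne' u _)) with hφdef
  have hsd : ∀ u, φ u ∈ (L u) \ ((Dset G ρ u).attach.image (fun x => φ x.1)) := by
    intro u
    have h : φ u = ((L u) \ (Dset G ρ u).attach.image (fun x => φ x.1)).min' (hne' u _) :=
      hwf.fix_eq _ u
    rw [h]; exact Finset.min'_mem _ _
  have hmem : ∀ u, φ u ∈ L u := fun u => (Finset.mem_sdiff.1 (hsd u)).1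
  have havoid : ∀ u x, x ∈ Dset G ρ u → φ u ≠ φ x := by
    intro u x hx heq
    exact (Finset.mem_sdiff.1 (hsd u)).2
      (Finset.mem_image.2 ⟨⟨x, hx⟩, Finset.mem_attach _ _, heq.symm⟩)
  refine ⟨φ, hmem, ?_, ?_⟩
  · intro a b hab
    rcases lt_trichotomy (ρ a) (ρ b) with h | h | h
    · intro he
      exact havoid b a (mem_Dset_back G ρ hab.symm h) he.symm
    · exact absurd (hρ h) hab.ne
    · exact havoid a b (mem_Dset_back G ρ hab h)
  · rintro v ⟨u0, hu0⟩
    have hm : minNbr G ρ v ∈ G.neighborFinset v :=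
      minNbr_mem G ρ ⟨u0, (SimpleGraph.mem_neighborFinset _ _ _).2 hu0⟩
    refine ⟨φ (minNbr G ρ v), minNbr G ρ v, ⟨(SimpleGraph.mem_neighborFinset _ _ _).1 hm, rfl⟩, ?_⟩
    rintro u' ⟨hadj', heq'⟩
    by_contra hne2
    exact havoid u' (minNbr G ρ v) (minNbr_mem_Dset G ρ hadj'.symm (fun h => hne2 h.symm)) heq'
end Greedy

-- Structural part: every outer-1-planar graph has a good vertex
section Key
set_option linter.unusedSectionVars false
set_option maxHeartbeats 1000000
open Finset Function
variable {V : Type} [Fintype V] [DecidableEq V]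
variable (G : SimpleGraph V) [DecidableRel G.Adj] (p : V → ℕ)

lemma cross_of_inside {x y w t : V} (h1 : p x < p w) (h2 : p w < p y)
    (h3 : p t < p x ∨ p y < p t) : Crosses p s(x,y) s(w,t) := by
  rcases h3 with h | h
  · exact Or.inr ⟨t, w, x, y, Sym2.eq_swap, rfl, h, h1, h2⟩
  · exact Or.inl ⟨x, y, w, t, rfl, rfl, h1, h2, h⟩

lemma sym2_eq_cases {w t w' t' : V} (h : s(w,t) = s(w',t')) :
    (w = w' ∧ t = t') ∨ (w = t' ∧ t = w') := by
  rwa [Sym2.eq_iff] at h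

lemma crosses_symm {e f : Sym2 V} (h : Crosses p e f) : Crosses p f e := h.symm

lemma interval (hp : Injective p)
    (hsub : ∀ e ∈ G.edgeSet, {f | f ∈ G.edgeSet ∧ Crosses p e f}.Subsingleton)
    (hdeg : ∀ v, 0 < G.degree v → 3 ≤ G.degree v) :
    ∀ (n : ℕ) (a b : V) (S : Finset V), S.card ≤ n →
      (∀ w, w ∈ S ↔ (0 < G.degree w ∧ p a < p w ∧ p w < p b)) →
      S.Nonempty →
      (∀ w ∈ S, ∀ t, G.Adj w t → t = a ∨ t = b ∨ t ∈ S) →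
      ∃ z, 0 < G.degree z ∧ ((G.neighborFinset z).filter
        (fun v => ¬ (G.neighborFinset v ⊆ insert z (G.neighborFinset z)))).card ≤ 2 := by
  intro n
  induction n with
  | zero =>
    intro a b S hcard hS hSne hclose
    obtain ⟨w, hw⟩ := hSne
    have := Finset.card_pos.2 (⟨w, hw⟩ : S.Nonempty)
    omega
  | succ n IH =>
    intro a b S hcard hS hSne hclose
    classical
    have hdpos : ∀ {x y : V}, G.Adj x y → 0 < G.degree x := by
      intro x y h
      rw [SimpleGraph.degree_pos_iff_exists_adj]
      exact ⟨y, h⟩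
    have hStest : ∀ t, 0 < G.degree t → p a < p t → p t < p b → t ∈ S :=
      fun t h1 h2 h3 => (hS t).2 ⟨h1, h2, h3⟩
    have hdeg3 : ∀ w ∈ S, 3 ≤ G.degree w := fun w hw => hdeg w ((hS w).1 hw).1
    have hab : p a < p b := by
      obtain ⟨w, hw⟩ := hSne
      have h := (hS w).1 hw
      omega
    have hposS : ∀ w ∈ S, ∀ t, G.Adj w t → p a ≤ p t ∧ p t ≤ p b := by
      intro w hw t ht
      rcases hclose w hw t ht with rfl | rfl | h
      · exact ⟨le_refl _, le_of_lt hab⟩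
      · exact ⟨le_of_lt hab, le_refl _⟩
      · have := (hS t).1 h
        omega
    have hcard2 : ∀ w : V,
        (∀ t1, t1 ∈ G.neighborFinset w → ∀ t2, t2 ∈ G.neighborFinset w →
          p t1 < p w → p t2 < p w → t1 = t2) →
        (∀ t1, t1 ∈ G.neighborFinset w → ∀ t2, t2 ∈ G.neighborFinset w →
          p w < p t1 → p w < p t2 → t1 = t2) → G.degree w ≤ 2 := by
      intro w hL hR
      have hne : ∀ t ∈ G.neighborFinset w, t ≠ w :=
        fun t ht => ((SimpleGraph.mem_neighborFinset _ _ _).1 ht).ne'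
      by_cases hl : ∃ t ∈ G.neighborFinset w, p t < p w
      · obtain ⟨tl, htl, htl'⟩ := hl
        by_cases hr : ∃ t ∈ G.neighborFinset w, p w < p t
        · obtain ⟨tr, htr, htr'⟩ := hr
          have hsubp : G.neighborFinset w ⊆ {tl, tr} := by
            intro t ht
            rcases lt_trichotomy (p t) (p w) with h | h | h
            · simp [hL t ht tl htl h htl']
            · exact absurd (hp h) (hne t ht)
            · simp [hR t ht tr htr h htr']
          calc G.degree w = (G.neighborFinset w).card := rfl
            _ ≤ ({tl, tr} : Finset V).card := Finset.card_le_card hsubp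
            _ ≤ 2 := by
                apply le_trans (Finset.card_insert_le _ _)
                simp
        · push_neg at hr
          have hsubp : G.neighborFinset w ⊆ {tl} := by
            intro t ht
            rcases lt_trichotomy (p t) (p w) with h | h | h
            · simp [hL t ht tl htl h htl']
            · exact absurd (hp h) (hne t ht)
            · exact absurd h (not_lt.2 (hr t ht))
          calc G.degree w = (G.neighborFinset w).card := rfl
            _ ≤ ({tl} : Finset V).card := Finset.card_le_card hsubp
            _ ≤ 2 := by simp
      · push_neg at hl
        by_cases hr : ∃ t ∈ G.neighborFinset w, p w < p t
        · obtain ⟨tr, htr, htr'⟩ := hr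
          have hsubp : G.neighborFinset w ⊆ {tr} := by
            intro t ht
            rcases lt_trichotomy (p t) (p w) with h | h | h
            · exact absurd h (not_lt.2 (hl t ht))
            · exact absurd (hp h) (hne t ht)
            · simp [hR t ht tr htr h htr']
          calc G.degree w = (G.neighborFinset w).card := rfl
            _ ≤ ({tr} : Finset V).card := Finset.card_le_card hsubp
            _ ≤ 2 := by simp
        · push_neg at hr
          have hsubp : G.neighborFinset w ⊆ ∅ := by
            intro t ht
            rcases lt_trichotomy (p t) (p w) with h | h | h
            · exact absurd h (not_lt.2 (hl t ht))
            · exact absurd (hp h) (hne t ht)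
            · exact absurd h (not_lt.2 (hr t ht))
          calc G.degree w = (G.neighborFinset w).card := rfl
            _ ≤ (∅ : Finset V).card := Finset.card_le_card hsubp
            _ ≤ 2 := by simp
    set Pset : Finset (V × V) := Finset.univ.filter (fun q : V × V =>
      G.Adj q.1 q.2 ∧ p a ≤ p q.1 ∧ p q.2 ≤ p b ∧ p q.1 < p q.2 ∧
      (S.filter (fun w => p q.1 < p w ∧ p w < p q.2)).Nonempty) with hPdef
    have hPmem : ∀ q : V × V, q ∈ Pset ↔ (G.Adj q.1 q.2 ∧ p a ≤ p q.1 ∧ p q.2 ≤ p b ∧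
        p q.1 < p q.2 ∧ (S.filter (fun w => p q.1 < p w ∧ p w < p q.2)).Nonempty) := by
      intro q; simp [hPdef]
    have hPne : Pset.Nonempty := by
      by_contra hPe
      rw [Finset.not_nonempty_iff_eq_empty] at hPe
      have hnoP : ∀ q : V × V, G.Adj q.1 q.2 → p a ≤ p q.1 → p q.2 ≤ p b → p q.1 < p q.2 →
          ∀ w ∈ S, ¬(p q.1 < p w ∧ p w < p q.2) := by
        intro q h1 h2 h3 h4 w hw hin
        have hmem : q ∈ Pset := (hPmem q).2 ⟨h1, h2, h3, h4, ⟨w, Finset.mem_filter.2 ⟨hw, hin⟩⟩⟩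
        rw [hPe] at hmem
        exact absurd hmem (Finset.notMem_empty _)
      obtain ⟨w0, hw0⟩ := hSne
      have hw0p := (hS w0).1 hw0
      have hL : ∀ t1, t1 ∈ G.neighborFinset w0 → ∀ t2, t2 ∈ G.neighborFinset w0 →
          p t1 < p w0 → p t2 < p w0 → t1 = t2 := by
        intro t1 ht1 t2 ht2 h1 h2
        by_contra hne
        have hadj1 : G.Adj w0 t1 := (SimpleGraph.mem_neighborFinset _ _ _).1 ht1
        have hadj2 : G.Adj w0 t2 := (SimpleGraph.mem_neighborFinset _ _ _).1 ht2
        have hb1 := hposS w0 hw0 t1 hadj1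
        have hb2 := hposS w0 hw0 t2 hadj2
        rcases lt_trichotomy (p t1) (p t2) with h | h | h
        · have ht2S : t2 ∈ S := hStest t2 (hdpos hadj2.symm) (by omega) (by omega)
          exact hnoP (t1, w0) hadj1.symm hb1.1 (le_of_lt hw0p.2.2) h1 t2 ht2S ⟨h, h2⟩
        · exact hne (hp h)
        · have ht1S : t1 ∈ S := hStest t1 (hdpos hadj1.symm) (by omega) (by omega)
          exact hnoP (t2, w0) hadj2.symm hb2.1 (le_of_lt hw0p.2.2) h2 t1 ht1S ⟨h, h1⟩
      have hR : ∀ t1, t1 ∈ G.neighborFinset w0 → ∀ t2, t2 ∈ G.neighborFinset w0 →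
          p w0 < p t1 → p w0 < p t2 → t1 = t2 := by
        intro t1 ht1 t2 ht2 h1 h2
        by_contra hne
        have hadj1 : G.Adj w0 t1 := (SimpleGraph.mem_neighborFinset _ _ _).1 ht1
        have hadj2 : G.Adj w0 t2 := (SimpleGraph.mem_neighborFinset _ _ _).1 ht2
        have hb1 := hposS w0 hw0 t1 hadj1
        have hb2 := hposS w0 hw0 t2 hadj2
        rcases lt_trichotomy (p t1) (p t2) with h | h | h
        · have ht1S : t1 ∈ S := hStest t1 (hdpos hadj1.symm) (by omega) (by omega)
          exact hnoP (w0, t2) hadj2 (le_of_lt hw0p.2.1) hb2.2 h2 t1 ht1S ⟨h1, h⟩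
        · exact hne (hp h)
        · have ht2S : t2 ∈ S := hStest t2 (hdpos hadj2.symm) (by omega) (by omega)
          exact hnoP (w0, t1) hadj1 (le_of_lt hw0p.2.1) hb1.2 h1 t2 ht2S ⟨h2, h⟩
      have hc2 := hcard2 w0 hL hR
      have hc3 := hdeg3 w0 hw0
      omega
    obtain ⟨q0, hq0P, hq0min⟩ := Finset.exists_min_image Pset
      (fun q => (S.filter (fun w => p q.1 < p w ∧ p w < p q.2)).card) hPne
    obtain ⟨hadjxy, hax, hyb, hxy, hIne⟩ := (hPmem q0).1 hq0P

    set x := q0.1 with hxdef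
    set y := q0.2 with hydef
    set I : Finset V := S.filter (fun w => p x < p w ∧ p w < p y) with hIdef
    have hF3 : ∀ t t', G.Adj t t' → p x ≤ p t → p t < p t' → p t' ≤ p y →
        (t ≠ x ∨ t' ≠ y) → ∀ w ∈ S, ¬ (p t < p w ∧ p w < p t') := by
      intro t t' hadj htx htt' hty htne w hw hint
      have hq : (t, t') ∈ Pset := (hPmem _).2 ⟨hadj, le_trans hax htx, le_trans hty hyb,
        htt', ⟨w, Finset.mem_filter.2 ⟨hw, hint⟩⟩⟩
      have hmin := hq0min _ hq
      simp only at hmin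
      have hsubI : S.filter (fun w' => p t < p w' ∧ p w' < p t') ⊆ I := by
        intro w' hw'
        obtain ⟨hw'S, h1, h2⟩ := Finset.mem_filter.1 hw'
        exact Finset.mem_filter.2 ⟨hw'S, by omega, by omega⟩
      have hwit : ∃ ww, ww ∈ I ∧ ww ∉ S.filter (fun w' => p t < p w' ∧ p w' < p t') := by
        rcases htne with hne | hne
        · have hxt : p x < p t := lt_of_le_of_ne htx (fun h => hne (hp h).symm)
          have htS : t ∈ S := hStest t (hdpos hadj) (by omega) (by
            have := le_trans hty hyb
            omega)
          refine ⟨t, Finset.mem_filter.2 ⟨htS, hxt, by omega⟩, ?_⟩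
          intro hcc
          exact absurd (Finset.mem_filter.1 hcc).2.1 (lt_irrefl _)
        · have hty' : p t' < p y := lt_of_le_of_ne hty (fun h => hne (hp h))
          have ht'S : t' ∈ S := hStest t' (hdpos hadj.symm) (by
            have := le_trans hax htx
            omega) (by
            have := hyb
            omega)
          refine ⟨t', Finset.mem_filter.2 ⟨ht'S, by omega, hty'⟩, ?_⟩
          intro hcc
          exact absurd (Finset.mem_filter.1 hcc).2.2 (lt_irrefl _)
      obtain ⟨ww, hw1, hw2⟩ := hwit
      have hss : S.filter (fun w' => p t < p w' ∧ p w' < p t') ⊂ I :=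
        ⟨hsubI, fun hcon => hw2 (hcon hw1)⟩
      have := Finset.card_lt_card hss
      omega
    have hexy : s(x,y) ∈ G.edgeSet := hadjxy
    have hxyuniq : ∀ {f g : Sym2 V}, f ∈ G.edgeSet → g ∈ G.edgeSet →
        Crosses p s(x,y) f → Crosses p s(x,y) g → f = g :=
      fun hf hg h1 h2 => hsub _ hexy ⟨hf, h1⟩ ⟨hg, h2⟩
    have hnocross : ∀ w ∈ I, (∀ t, G.Adj w t → ¬(p t < p x ∨ p y < p t)) → False := by
      intro w hwI hnot
      obtain ⟨hwS, hxw, hwy⟩ := Finset.mem_filter.1 hwI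
      have hbnd : ∀ t, G.Adj w t → p x ≤ p t ∧ p t ≤ p y := by
        intro t ht
        have h := hnot t ht
        push_neg at h
        exact h
      have hwny : w ≠ y := fun h => lt_irrefl _ (h ▸ hwy)
      have hwnx : w ≠ x := fun h => absurd hxw (by rw [h]; exact lt_irrefl _)
      have hL : ∀ t1, t1 ∈ G.neighborFinset w → ∀ t2, t2 ∈ G.neighborFinset w →
          p t1 < p w → p t2 < p w → t1 = t2 := by
        intro t1 ht1 t2 ht2 h1 h2
        by_contra hne
        have hadj1 : G.Adj w t1 := (SimpleGraph.mem_neighborFinset _ _ _).1 ht1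
        have hadj2 : G.Adj w t2 := (SimpleGraph.mem_neighborFinset _ _ _).1 ht2
        have hb1 := hbnd t1 hadj1
        have hb2 := hbnd t2 hadj2
        rcases lt_trichotomy (p t1) (p t2) with h | h | h
        · have ht2S : t2 ∈ S := hStest t2 (hdpos hadj2.symm)
            (by have := le_trans hax hb1.1; omega)
            (by have := le_trans (le_of_lt hwy) hyb; omega)
          exact hF3 t1 w hadj1.symm hb1.1 h1 (le_of_lt hwy) (Or.inr hwny) t2 ht2S ⟨h, h2⟩
        · exact hne (hp h)
        · have ht1S : t1 ∈ S := hStest t1 (hdpos hadj1.symm)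
            (by have := le_trans hax hb2.1; omega)
            (by have := le_trans (le_of_lt hwy) hyb; omega)
          exact hF3 t2 w hadj2.symm hb2.1 h2 (le_of_lt hwy) (Or.inr hwny) t1 ht1S ⟨h, h1⟩
      have hR : ∀ t1, t1 ∈ G.neighborFinset w → ∀ t2, t2 ∈ G.neighborFinset w →
          p w < p t1 → p w < p t2 → t1 = t2 := by
        intro t1 ht1 t2 ht2 h1 h2
        by_contra hne
        have hadj1 : G.Adj w t1 := (SimpleGraph.mem_neighborFinset _ _ _).1 ht1
        have hadj2 : G.Adj w t2 := (SimpleGraph.mem_neighborFinset _ _ _).1 ht2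
        have hb1 := hbnd t1 hadj1
        have hb2 := hbnd t2 hadj2
        rcases lt_trichotomy (p t1) (p t2) with h | h | h
        · have ht1S : t1 ∈ S := hStest t1 (hdpos hadj1.symm)
            (by have := le_trans hax (le_of_lt hxw); omega)
            (by have := le_trans hb2.2 hyb; omega)
          exact hF3 w t2 hadj2 (le_of_lt hxw) h2 hb2.2 (Or.inl hwnx) t1 ht1S ⟨h1, h⟩
        · exact hne (hp h)
        · have ht2S : t2 ∈ S := hStest t2 (hdpos hadj2.symm)
            (by have := le_trans hax (le_of_lt hxw); omega)
            (by have := le_trans hb1.2 hyb; omega)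
          exact hF3 w t1 hadj1 (le_of_lt hxw) h1 hb1.2 (Or.inl hwnx) t2 ht2S ⟨h2, h⟩
      have hc2 := hcard2 w hL hR
      have hc3 := hdeg3 w hwS
      omega
    have hIone : ∀ w1 ∈ I, ∀ w2 ∈ I, w1 = w2 := by
      intro w1 h1 w2 h2
      by_contra hne
      have hout : ∀ u1 ∈ I, ∀ t1, G.Adj u1 t1 → (p t1 < p x ∨ p y < p t1) →
          ∀ u2 ∈ I, ∀ t2, G.Adj u2 t2 → (p t2 < p x ∨ p y < p t2) → u1 = u2 := by
        intro u1 hu1 t1 ha1 ho1 u2 hu2 t2 ha2 ho2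
        obtain ⟨_, hx1, hy1⟩ := Finset.mem_filter.1 hu1
        obtain ⟨_, hx2, hy2⟩ := Finset.mem_filter.1 hu2
        have hc1 : Crosses p s(x,y) s(u1,t1) := cross_of_inside p hx1 hy1 ho1
        have hc2 : Crosses p s(x,y) s(u2,t2) := cross_of_inside p hx2 hy2 ho2
        have heq := hxyuniq ha1 ha2 hc1 hc2
        rcases sym2_eq_cases heq with ⟨h, _⟩ | ⟨h, _⟩
        · exact h
        · exfalso
          rw [h] at hx1 hy1
          rcases ho2 with ho | ho <;> omega
      by_cases hc1 : ∃ t, G.Adj w1 t ∧ (p t < p x ∨ p y < p t)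
      · apply hnocross w2 h2
        intro t ht hto
        obtain ⟨t1, ht1, hto1⟩ := hc1
        exact hne (hout w1 h1 t1 ht1 hto1 w2 h2 t ht hto)
      · push_neg at hc1
        exact hnocross w1 h1 (fun t ht hto => by have := hc1 t ht; rcases hto with h|h <;> omega)
    obtain ⟨u, huI⟩ := hIne
    have huS : u ∈ S := (Finset.mem_filter.1 huI).1
    have hxu : p x < p u := (Finset.mem_filter.1 huI).2.1
    have huy : p u < p y := (Finset.mem_filter.1 huI).2.2
    obtain ⟨v, hv_adj, hv_out⟩ : ∃ v, G.Adj u v ∧ (p v < p x ∨ p y < p v) := by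
      by_contra hcon
      push_neg at hcon
      exact hnocross u huI (fun t ht hout => by have := hcon t ht; rcases hout with h|h <;> omega)
    have hvne : ∀ t, G.Adj u t → (p t < p x ∨ p y < p t) → t = v := by
      intro t ht hto
      have hct : Crosses p s(x,y) s(u,t) := cross_of_inside p hxu huy hto
      have heq := hxyuniq ht hv_adj hct (cross_of_inside p hxu huy hv_out)
      rcases sym2_eq_cases heq with ⟨_, h⟩ | ⟨h1, _⟩
      · exact h
      · exfalso
        rw [h1] at hxu huy
        rcases hv_out with ho | ho <;> omega
    have hNusub : G.neighborFinset u ⊆ {x, y, v} := by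
      intro t ht
      have hadj : G.Adj u t := (SimpleGraph.mem_neighborFinset _ _ _).1 ht
      rcases lt_trichotomy (p t) (p x) with h | h | h
      · simp [hvne t hadj (Or.inl h)]
      · simp [hp h]
      · rcases lt_trichotomy (p t) (p y) with h' | h' | h'
        · exfalso
          have htS : t ∈ S := hStest t (hdpos hadj.symm) (by omega) (by
            have := hyb; omega)
          have htI : t ∈ I := Finset.mem_filter.2 ⟨htS, h, h'⟩
          have := hIone t htI u huI
          exact hadj.ne' this
        · simp [hp h']
        · simp [hvne t hadj (Or.inr h')]
    have hNu : G.neighborFinset u = {x, y, v} := by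
      apply Finset.eq_of_subset_of_card_le hNusub
      calc ({x, y, v} : Finset V).card ≤ 3 := by
            apply le_trans (Finset.card_insert_le _ _)
            apply Nat.succ_le_succ
            apply le_trans (Finset.card_insert_le _ _)
            simp
        _ ≤ (G.neighborFinset u).card := hdeg3 u huS
    have hadjux : G.Adj u x := by
      have hx : x ∈ G.neighborFinset u := by rw [hNu]; simp
      exact (SimpleGraph.mem_neighborFinset _ _ _).1 hx
    have hadjuy : G.Adj u y := by
      have hy : y ∈ G.neighborFinset u := by rw [hNu]; simp
      exact (SimpleGraph.mem_neighborFinset _ _ _).1 hy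
    have hf0 : s(u,v) ∈ G.edgeSet := hv_adj
    have hcross0 : Crosses p s(x,y) s(u,v) := cross_of_inside p hxu huy hv_out
    have hban3 : ∀ {w t : V}, G.Adj w t → Crosses p s(u,v) s(w,t) → s(w,t) = s(x,y) := by
      intro w t hwt hc
      exact hsub _ hf0 ⟨hwt, hc⟩ ⟨hexy, crosses_symm p hcross0⟩
    rcases hv_out with hvx | hvy
    · -- p v < p x
      have hpav : p a ≤ p v := (hposS u huS v hv_adj).1
      have hxS : x ∈ S := hStest x (hdpos hadjxy) (by omega) (by omega)
      set J : Finset V := S.filter (fun w => p v < p w ∧ p w < p x) with hJdef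
      by_cases hJne : J.Nonempty
      · have huJ : u ∉ J := by
          intro hc
          have := (Finset.mem_filter.1 hc).2.2
          omega
        have hJcard : J.card ≤ n := by
          have hss : J ⊂ S := ⟨Finset.filter_subset _ _, fun hc => huJ (hc huS)⟩
          have := Finset.card_lt_card hss
          omega
        apply IH v x J hJcard ?_ hJne ?_
        · intro w
          constructor
          · intro hw
            obtain ⟨hwS, h1, h2⟩ := Finset.mem_filter.1 hw
            exact ⟨((hS w).1 hwS).1, h1, h2⟩
          · rintro ⟨h0, h1, h2⟩
            exact Finset.mem_filter.2 ⟨hStest w h0 (by omega) (by omega), h1, h2⟩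
        · intro w hwJ t hadjwt
          obtain ⟨hwS, hvw, hwx⟩ := Finset.mem_filter.1 hwJ
          rcases lt_trichotomy (p t) (p v) with h | h | h
          · exfalso
            have hcc : Crosses p s(u,v) s(w,t) :=
              Or.inr ⟨t, w, v, u, Sym2.eq_swap, Sym2.eq_swap, h, hvw, by omega⟩
            have heq := hban3 hadjwt hcc
            rcases sym2_eq_cases heq with ⟨h1, _⟩ | ⟨h1, _⟩ <;> rw [h1] at hwx <;> omega
          · exact Or.inl (hp h)
          · rcases lt_trichotomy (p t) (p x) with h' | h' | h'
            · have htS : t ∈ S := hStest t (hdpos hadjwt.symm) (by omega) (by omega)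
              exact Or.inr (Or.inr (Finset.mem_filter.2 ⟨htS, h, h'⟩))
            · exact Or.inr (Or.inl (hp h'))
            · rcases lt_trichotomy (p t) (p y) with h'' | h'' | h''
              · exfalso
                have htS : t ∈ S := hStest t (hdpos hadjwt.symm) (by omega) (by omega)
                have htI : t ∈ I := Finset.mem_filter.2 ⟨htS, h', h''⟩
                have heqt : t = u := hIone t htI u huI
                have hcc : Crosses p s(x,y) s(w,t) :=
                  Or.inr ⟨w, t, x, y, rfl, rfl, hwx, h', h''⟩
                have heq2 := hxyuniq hadjwt hv_adj hcc hcross0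
                rw [heqt] at heq2
                rcases sym2_eq_cases heq2 with ⟨h1, _⟩ | ⟨h1, _⟩
                · rw [h1] at hwx; omega
                · rw [h1] at hvw; omega
              · exfalso
                have hcc : Crosses p s(u,v) s(w,t) :=
                  Or.inl ⟨v, u, w, t, Sym2.eq_swap, rfl, hvw, by omega, by omega⟩
                have heq := hban3 hadjwt hcc
                rcases sym2_eq_cases heq with ⟨h1, _⟩ | ⟨h1, _⟩ <;> rw [h1] at hwx <;> omega
              · exfalso
                have hcc : Crosses p s(u,v) s(w,t) :=
                  Or.inl ⟨v, u, w, t, Sym2.eq_swap, rfl, hvw, by omega, by omega⟩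
                have heq := hban3 hadjwt hcc
                rcases sym2_eq_cases heq with ⟨h1, _⟩ | ⟨h1, _⟩ <;> rw [h1] at hwx <;> omega
      · have hJe : ∀ t, t ∉ J := fun t ht => hJne ⟨t, ht⟩
        have hNxsub : G.neighborFinset x ⊆ {v, u, y} := by
          intro t ht
          have hadj : G.Adj x t := (SimpleGraph.mem_neighborFinset _ _ _).1 ht
          rcases lt_trichotomy (p t) (p v) with h | h | h
          · exfalso
            have hcc : Crosses p s(u,v) s(x,t) :=
              Or.inr ⟨t, x, v, u, Sym2.eq_swap, Sym2.eq_swap, h, hvx, hxu⟩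
            have heq := hban3 hadj hcc
            rcases sym2_eq_cases heq with ⟨_, h2⟩ | ⟨h1, _⟩
            · rw [h2] at h; omega
            · rw [h1] at hxu; omega
          · simp [hp h]
          · rcases lt_trichotomy (p t) (p x) with h' | h' | h'
            · exfalso
              have htS : t ∈ S := hStest t (hdpos hadj.symm) (by omega) (by omega)
              exact hJe t (Finset.mem_filter.2 ⟨htS, h, h'⟩)
            · exact absurd (hp h') hadj.ne'
            · rcases lt_trichotomy (p t) (p y) with h'' | h'' | h''
              · have htS : t ∈ S := hStest t (hdpos hadj.symm) (by omega) (by omega)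
                have := hIone t (Finset.mem_filter.2 ⟨htS, h', h''⟩) u huI
                simp [this]
              · simp [hp h'']
              · exfalso
                have hcc : Crosses p s(u,v) s(x,t) :=
                  Or.inl ⟨v, u, x, t, Sym2.eq_swap, rfl, hvx, hxu, by omega⟩
                have heq := hban3 hadj hcc
                rcases sym2_eq_cases heq with ⟨_, h2⟩ | ⟨h1, _⟩
                · rw [h2] at h''; omega
                · rw [h1] at hxu; omega
        have hNx : G.neighborFinset x = {v, u, y} := by
          apply Finset.eq_of_subset_of_card_le hNxsub
          calc ({v, u, y} : Finset V).card ≤ 3 := by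
                apply le_trans (Finset.card_insert_le _ _)
                apply Nat.succ_le_succ
                apply le_trans (Finset.card_insert_le _ _)
                simp
            _ ≤ (G.neighborFinset x).card := hdeg3 x hxS
        refine ⟨x, hdpos hadjxy, ?_⟩
        have husub : G.neighborFinset u ⊆ insert x (G.neighborFinset x) := by
          rw [hNu, hNx]
          intro t ht
          simp only [Finset.mem_insert, Finset.mem_singleton] at ht ⊢
          tauto
        have hbsub : (G.neighborFinset x).filter
            (fun v' => ¬ (G.neighborFinset v' ⊆ insert x (G.neighborFinset x))) ⊆
            (G.neighborFinset x).erase u := by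
          intro t ht
          obtain ⟨htN, hpred⟩ := Finset.mem_filter.1 ht
          refine Finset.mem_erase.2 ⟨?_, htN⟩
          rintro rfl
          exact hpred husub
        have huNx : u ∈ G.neighborFinset x := by rw [hNx]; simp
        have hNxcard : (G.neighborFinset x).card ≤ 3 := by
          rw [hNx]
          apply le_trans (Finset.card_insert_le _ _)
          apply Nat.succ_le_succ
          apply le_trans (Finset.card_insert_le _ _)
          simp
        have hdx := hdeg3 x hxS
        have hdegx : G.degree x = (G.neighborFinset x).card := rfl
        refine le_trans (Finset.card_le_card hbsub) ?_
        rw [Finset.card_erase_of_mem huNx]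
        omega
    · -- p y < p v
      have hpvb : p v ≤ p b := (hposS u huS v hv_adj).2
      have hyS : y ∈ S := hStest y (hdpos hadjxy.symm) (by omega) (by omega)
      set J : Finset V := S.filter (fun w => p y < p w ∧ p w < p v) with hJdef
      by_cases hJne : J.Nonempty
      · have huJ : u ∉ J := by
          intro hc
          have := (Finset.mem_filter.1 hc).2.1
          omega
        have hJcard : J.card ≤ n := by
          have hss : J ⊂ S := ⟨Finset.filter_subset _ _, fun hc => huJ (hc huS)⟩
          have := Finset.card_lt_card hss
          omega
        apply IH y v J hJcard ?_ hJne ?_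
        · intro w
          constructor
          · intro hw
            obtain ⟨hwS, h1, h2⟩ := Finset.mem_filter.1 hw
            exact ⟨((hS w).1 hwS).1, h1, h2⟩
          · rintro ⟨h0, h1, h2⟩
            exact Finset.mem_filter.2 ⟨hStest w h0 (by omega) (by omega), h1, h2⟩
        · intro w hwJ t hadjwt
          obtain ⟨hwS, hyw, hwv⟩ := Finset.mem_filter.1 hwJ
          rcases lt_trichotomy (p t) (p u) with h | h | h
          · exfalso
            have hcc : Crosses p s(u,v) s(w,t) :=
              Or.inr ⟨t, w, u, v, Sym2.eq_swap, rfl, h, by omega, hwv⟩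
            have heq := hban3 hadjwt hcc
            rcases sym2_eq_cases heq with ⟨h1, _⟩ | ⟨h1, _⟩ <;> rw [h1] at hyw <;> omega
          · exfalso
            have ht : t = u := hp h
            have hcc : Crosses p s(x,y) s(t, w) :=
              Or.inl ⟨x, y, t, w, rfl, rfl, by omega, by omega, hyw⟩
            have heq2 := hxyuniq hadjwt.symm hv_adj hcc hcross0
            rw [ht] at heq2
            rcases sym2_eq_cases heq2 with ⟨_, h2⟩ | ⟨_, h2⟩
            · rw [h2] at hwv; omega
            · rw [h2] at hyw; omega
          · rcases lt_trichotomy (p t) (p y) with h' | h' | h'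
            · exfalso
              have htS : t ∈ S := hStest t (hdpos hadjwt.symm) (by omega) (by omega)
              have htI : t ∈ I := Finset.mem_filter.2 ⟨htS, by omega, h'⟩
              have heq3 := hIone t htI u huI
              rw [heq3] at h; omega
            · exact Or.inl (hp h')
            · rcases lt_trichotomy (p t) (p v) with h'' | h'' | h''
              · have htS : t ∈ S := hStest t (hdpos hadjwt.symm) (by omega) (by omega)
                exact Or.inr (Or.inr (Finset.mem_filter.2 ⟨htS, h', h''⟩))
              · exact Or.inr (Or.inl (hp h''))
              · exfalso
                have hcc : Crosses p s(u,v) s(w,t) :=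
                  Or.inl ⟨u, v, w, t, rfl, rfl, by omega, hwv, h''⟩
                have heq := hban3 hadjwt hcc
                rcases sym2_eq_cases heq with ⟨h1, _⟩ | ⟨h1, _⟩ <;> rw [h1] at hyw <;> omega
      · have hJe : ∀ t, t ∉ J := fun t ht => hJne ⟨t, ht⟩
        have hNysub : G.neighborFinset y ⊆ {x, u, v} := by
          intro t ht
          have hadj : G.Adj y t := (SimpleGraph.mem_neighborFinset _ _ _).1 ht
          rcases lt_trichotomy (p t) (p x) with h | h | h
          · exfalso
            have hcc : Crosses p s(u,v) s(y,t) :=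
              Or.inr ⟨t, y, u, v, Sym2.eq_swap, rfl, by omega, huy, hvy⟩
            have heq := hban3 hadj hcc
            rcases sym2_eq_cases heq with ⟨h1, _⟩ | ⟨_, h2⟩
            · rw [h1] at huy; omega
            · rw [h2] at h; omega
          · simp [hp h]
          · rcases lt_trichotomy (p t) (p y) with h' | h' | h'
            · have htS : t ∈ S := hStest t (hdpos hadj.symm) (by omega) (by omega)
              have := hIone t (Finset.mem_filter.2 ⟨htS, h, h'⟩) u huI
              simp [this]
            · exact absurd (hp h') hadj.ne'
            · rcases lt_trichotomy (p t) (p v) with h'' | h'' | h''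
              · exfalso
                have htS : t ∈ S := hStest t (hdpos hadj.symm) (by omega) (by omega)
                exact hJe t (Finset.mem_filter.2 ⟨htS, h', h''⟩)
              · simp [hp h'']
              · exfalso
                have hcc : Crosses p s(u,v) s(y,t) :=
                  Or.inl ⟨u, v, y, t, rfl, rfl, huy, hvy, h''⟩
                have heq := hban3 hadj hcc
                rcases sym2_eq_cases heq with ⟨h1, _⟩ | ⟨_, h2⟩
                · rw [h1] at huy; omega
                · rw [h2] at h''; omega
        have hNy : G.neighborFinset y = {x, u, v} := by
          apply Finset.eq_of_subset_of_card_le hNysub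
          calc ({x, u, v} : Finset V).card ≤ 3 := by
                apply le_trans (Finset.card_insert_le _ _)
                apply Nat.succ_le_succ
                apply le_trans (Finset.card_insert_le _ _)
                simp
            _ ≤ (G.neighborFinset y).card := hdeg3 y hyS
        refine ⟨y, hdpos hadjxy.symm, ?_⟩
        have husub : G.neighborFinset u ⊆ insert y (G.neighborFinset y) := by
          rw [hNu, hNy]
          intro t ht
          simp only [Finset.mem_insert, Finset.mem_singleton] at ht ⊢
          tauto
        have hbsub : (G.neighborFinset y).filter
            (fun v' => ¬ (G.neighborFinset v' ⊆ insert y (G.neighborFinset y))) ⊆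
            (G.neighborFinset y).erase u := by
          intro t ht
          obtain ⟨htN, hpred⟩ := Finset.mem_filter.1 ht
          refine Finset.mem_erase.2 ⟨?_, htN⟩
          rintro rfl
          exact hpred husub
        have huNy : u ∈ G.neighborFinset y := by rw [hNy]; simp
        have hNycard : (G.neighborFinset y).card ≤ 3 := by
          rw [hNy]
          apply le_trans (Finset.card_insert_le _ _)
          apply Nat.succ_le_succ
          apply le_trans (Finset.card_insert_le _ _)
          simp
        have hdy := hdeg3 y hyS
        have hdegy : G.degree y = (G.neighborFinset y).card := rfl
        refine le_trans (Finset.card_le_card hbsub) ?_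
        rw [Finset.card_erase_of_mem huNy]
        omega



lemma key (hG : OuterOnePlanar G) (hE : G.edgeFinset.Nonempty) :
    ∃ z, 0 < G.degree z ∧ ((G.neighborFinset z).filter
      (fun v => ¬ (G.neighborFinset v ⊆ insert z (G.neighborFinset z)))).card ≤ 2 := by
  classical
  by_cases hsmall : ∃ z, 0 < G.degree z ∧ G.degree z ≤ 2
  · obtain ⟨z, hz1, hz2⟩ := hsmall
    refine ⟨z, hz1, ?_⟩
    calc ((G.neighborFinset z).filter _).card ≤ (G.neighborFinset z).card :=
          Finset.card_filter_le _ _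
      _ ≤ 2 := hz2
  · push_neg at hsmall
    have hdeg : ∀ v, 0 < G.degree v → 3 ≤ G.degree v := by
      intro v hv
      have := hsmall v hv
      omega
    obtain ⟨p, hp, hsub⟩ := hG
    obtain ⟨e0, he0⟩ := hE
    have hAB : ∃ a b, G.Adj a b := by
      revert he0
      refine Sym2.ind (fun a b he => ⟨a, b, ?_⟩) e0
      rwa [SimpleGraph.mem_edgeFinset, SimpleGraph.mem_edgeSet] at he
    obtain ⟨a0, b0, hab0⟩ := hAB
    have hdpos : ∀ {x y : V}, G.Adj x y → 0 < G.degree x := by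
      intro x y h
      rw [SimpleGraph.degree_pos_iff_exists_adj]
      exact ⟨y, h⟩
    set NI : Finset V := Finset.univ.filter (fun v => 0 < G.degree v) with hNI
    have hNIne : NI.Nonempty := ⟨a0, by simp [hNI, hdpos hab0]⟩
    obtain ⟨a, haNI, hamin⟩ := Finset.exists_min_image NI p hNIne
    obtain ⟨b, hbNI, hbmax⟩ := Finset.exists_max_image NI p hNIne
    set S : Finset V := Finset.univ.filter (fun w => 0 < G.degree w ∧ p a < p w ∧ p w < p b)
      with hSdef
    have hS : ∀ w, w ∈ S ↔ (0 < G.degree w ∧ p a < p w ∧ p w < p b) := by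
      intro w; simp [hSdef]
    have hNImem : ∀ {w : V}, 0 < G.degree w → w = a ∨ w = b ∨ w ∈ S := by
      intro w hw
      have hwNI : w ∈ NI := by simp [hNI, hw]
      have h1 := hamin w hwNI
      have h2 := hbmax w hwNI
      rcases eq_or_lt_of_le h1 with h | h
      · exact Or.inl (hp h.symm)
      rcases eq_or_lt_of_le h2 with h' | h'
      · exact Or.inr (Or.inl (hp h'))
      · exact Or.inr (Or.inr ((hS w).2 ⟨hw, h, h'⟩))
    have hSne : S.Nonempty := by
      by_contra hSe
      rw [Finset.not_nonempty_iff_eq_empty] at hSe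
      have haA : 0 < G.degree a := by
        have := Finset.mem_filter.1 haNI; exact this.2
      have h3 := hdeg a haA
      have hsub1 : G.neighborFinset a ⊆ {b} := by
        intro t ht
        have hadj : G.Adj a t := (SimpleGraph.mem_neighborFinset _ _ _).1 ht
        have htpos : 0 < G.degree t := hdpos hadj.symm
        rcases hNImem htpos with rfl | rfl | h
        · exact absurd rfl hadj.ne'
        · exact Finset.mem_singleton_self _
        · rw [hSe] at h; exact absurd h (Finset.notMem_empty _)
      have := Finset.card_le_card hsub1
      simp only [Finset.card_singleton] at this
      have : G.degree a ≤ 1 := this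
      omega
    refine interval G p hp hsub hdeg S.card a b S le_rfl hS hSne ?_
    intro w hw t ht
    have htpos : 0 < G.degree t := hdpos ht.symm
    exact hNImem htpos
end Key

-- Existence of a good order
section Order
set_option linter.unusedSectionVars false
set_option maxHeartbeats 1000000
open Finset Function
variable {V : Type} [Fintype V] [DecidableEq V]

lemma order_of_no_edges (G : SimpleGraph V) [inst : DecidableRel G.Adj]
    (h : ∀ a b, ¬ G.Adj a b) :
    ∃ ρ : V → ℕ, Injective ρ ∧ ∀ u, (Dset G ρ u).card ≤ G.degree u + 2 := by
  refine ⟨fun v => (Fintype.equivFin V v : ℕ), ?_, ?_⟩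
  · intro a b hab
    exact (Fintype.equivFin V).injective (Fin.val_injective hab)
  · intro u
    have hN : G.neighborFinset u = ∅ := by
      ext t
      simp only [SimpleGraph.mem_neighborFinset, Finset.notMem_empty, iff_false]
      exact h u t
    unfold Dset
    rw [hN]
    simp

lemma order_exists (n : ℕ) : ∀ (G : SimpleGraph V) [inst : DecidableRel G.Adj],
    G.edgeFinset.card ≤ n → OuterOnePlanar G →
    ∃ ρ : V → ℕ, Injective ρ ∧ ∀ u, (Dset G ρ u).card ≤ G.degree u + 2 := by
  induction n with
  | zero =>
    intro G inst hcard hG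
    apply order_of_no_edges
    intro a b hab
    have h1 : s(a, b) ∈ G.edgeFinset := SimpleGraph.mem_edgeFinset.2 hab
    have := Finset.card_pos.2 ⟨s(a,b), h1⟩
    omega
  | succ n IH =>
    intro G inst hcard hG
    by_cases hE : G.edgeFinset.Nonempty
    swap
    · apply order_of_no_edges
      intro a b hab
      rw [Finset.not_nonempty_iff_eq_empty] at hE
      have h1 : s(a, b) ∈ G.edgeFinset := SimpleGraph.mem_edgeFinset.2 hab
      rw [hE] at h1
      exact absurd h1 (Finset.notMem_empty _)
    obtain ⟨z, hz1, hz2⟩ := key G hG hE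
    let G' : SimpleGraph V :=
      { Adj := fun a b => G.Adj a b ∧ a ≠ z ∧ b ≠ z
        symm := ⟨fun a b h => ⟨h.1.symm, h.2.2, h.2.1⟩⟩
        loopless := ⟨fun a h => G.loopless.irrefl a h.1⟩ }
    haveI inst' : DecidableRel G'.Adj :=
      fun a b => inferInstanceAs (Decidable (G.Adj a b ∧ a ≠ z ∧ b ≠ z))
    have hAdj' : ∀ a b, G'.Adj a b ↔ (G.Adj a b ∧ a ≠ z ∧ b ≠ z) := fun a b => Iff.rfl
    have hES : G'.edgeSet ⊆ G.edgeSet := by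
      intro e
      refine Sym2.ind (fun a b he => ?_) e
      exact ((hAdj' a b).1 he).1
    have hG' : OuterOnePlanar G' := by
      obtain ⟨p, hp, hsub⟩ := hG
      refine ⟨p, hp, ?_⟩
      intro e he f hf g hg
      exact hsub e (hES he) ⟨hES hf.1, hf.2⟩ ⟨hES hg.1, hg.2⟩
    obtain ⟨w0, hw0⟩ := (SimpleGraph.degree_pos_iff_exists_adj _ _).1 hz1
    have hssE : G'.edgeFinset ⊂ G.edgeFinset := by
      constructor
      · intro e he
        rw [SimpleGraph.mem_edgeFinset] at he ⊢
        exact hES he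
      · intro hcon
        have h1 : s(z, w0) ∈ G.edgeFinset := SimpleGraph.mem_edgeFinset.2 hw0
        have h2 := hcon h1
        rw [SimpleGraph.mem_edgeFinset] at h2
        exact ((hAdj' z w0).1 h2).2.1 rfl
    have hcard' : G'.edgeFinset.card ≤ n := by
      have := Finset.card_lt_card hssE
      omega
    obtain ⟨ρ', hρ', hgood'⟩ := IH G' hcard' hG'
    set M : ℕ := Finset.univ.sup ρ' with hM
    have hsupM : ∀ v : V, ρ' v ≤ M := fun v => Finset.le_sup (Finset.mem_univ v)
    set ρ : V → ℕ := fun v => if v = z then M + 1 else ρ' v with hρdef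
    have hρz : ρ z = M + 1 := by simp [hρdef]
    have hρne : ∀ v, v ≠ z → ρ v = ρ' v := fun v hv => by simp [hρdef, hv]
    have hρlt : ∀ v, v ≠ z → ρ v < ρ z := by
      intro v hv
      rw [hρz, hρne v hv]
      have := hsupM v
      omega
    have hρinj : Injective ρ := by
      intro v1 v2 h
      by_cases h1 : v1 = z <;> by_cases h2 : v2 = z
      · rw [h1, h2]
      · exfalso
        rw [h1, hρz, hρne v2 h2] at h
        have := hsupM v2
        omega
      · exfalso
        rw [h2, hρz, hρne v1 h1] at h
        have := hsupM v1
        omega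
      · rw [hρne v1 h1, hρne v2 h2] at h
        exact hρ' h
    have hN'v : ∀ v, v ≠ z → G'.neighborFinset v = (G.neighborFinset v).erase z := by
      intro v hv
      ext t
      simp only [SimpleGraph.mem_neighborFinset, Finset.mem_erase, hAdj']
      constructor
      · rintro ⟨h1, _, h3⟩
        exact ⟨h3, h1⟩
      · rintro ⟨h1, h2⟩
        exact ⟨h2, hv, h1⟩
    have hminT : ∀ v, v ≠ z → (G'.neighborFinset v).Nonempty →
        minNbr G ρ v = minNbr G' ρ' v := by
      intro v hv hne
      have hm' := minNbr_mem G' ρ' hne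
      rw [hN'v v hv] at hm'
      obtain ⟨hmz, hmN⟩ := Finset.mem_erase.1 hm'
      apply minNbr_eq G ρ hρinj hmN
      intro t htN
      by_cases htz : t = z
      · exact le_of_lt (htz ▸ hρlt _ hmz)
      · rw [hρne _ hmz, hρne _ htz]
        apply minNbr_le G' ρ'
        rw [hN'v v hv]
        exact Finset.mem_erase.2 ⟨htz, htN⟩
    refine ⟨ρ, hρinj, ?_⟩
    intro u
    by_cases huz : u = z
    · subst huz
      have hDz : Dset G ρ u ⊆ (G.neighborFinset u) ∪
          (((G.neighborFinset u).filter
            (fun v => ¬ (G.neighborFinset v ⊆ insert u (G.neighborFinset u)))).image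
              (minNbr G ρ)) := by
        intro t ht
        rcases Finset.mem_union.1 ht with h | h
        · exact Finset.mem_union_left _ (Finset.mem_filter.1 h).1
        · obtain ⟨htz, himg⟩ := Finset.mem_erase.1 h
          obtain ⟨v, hvN, rfl⟩ := Finset.mem_image.1 himg
          by_cases hvgood : G.neighborFinset v ⊆ insert u (G.neighborFinset u)
          · have hvnemp : (G.neighborFinset v).Nonempty :=
              ⟨u, (SimpleGraph.mem_neighborFinset _ _ _).2
                ((SimpleGraph.mem_neighborFinset _ _ _).1 hvN).symm⟩
            have hmm := minNbr_mem G ρ hvnemp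
            have hmem2 := hvgood hmm
            rcases Finset.mem_insert.1 hmem2 with h1 | h1
            · exact absurd h1 htz
            · exact Finset.mem_union_left _ h1
          · exact Finset.mem_union_right _
              (Finset.mem_image.2 ⟨v, Finset.mem_filter.2 ⟨hvN, hvgood⟩, rfl⟩)
      have h1 := Finset.card_le_card hDz
      have h2 := Finset.card_union_le (G.neighborFinset u)
        (((G.neighborFinset u).filter
          (fun v => ¬ (G.neighborFinset v ⊆ insert u (G.neighborFinset u)))).image
            (minNbr G ρ))
      have h3 : (((G.neighborFinset u).filter
          (fun v => ¬ (G.neighborFinset v ⊆ insert u (G.neighborFinset u)))).image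
            (minNbr G ρ)).card ≤ 2 :=
        le_trans Finset.card_image_le hz2
      have hd : G.degree u = (G.neighborFinset u).card := rfl
      omega
    · have hNsym : ∀ {v t : V}, v ∈ G.neighborFinset t → t ∈ G.neighborFinset v := by
        intro v t h
        exact (SimpleGraph.mem_neighborFinset _ _ _).2
          ((SimpleGraph.mem_neighborFinset _ _ _).1 h).symm
      have htrans : ∀ t, t ≠ u → t ∈ ((G.neighborFinset u).image (minNbr G ρ)).erase u →
          t ∈ Dset G' ρ' u ∨ t = minNbr G ρ z := by
        intro t htu ht
        obtain ⟨_, himg⟩ := Finset.mem_erase.1 ht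
        obtain ⟨v, hvN, rfl⟩ := Finset.mem_image.1 himg
        by_cases hvz : v = z
        · right; rw [hvz]
        · left
          have huv : u ∈ G'.neighborFinset v := by
            rw [hN'v v hvz]
            exact Finset.mem_erase.2 ⟨huz, hNsym hvN⟩
          have hnemp : (G'.neighborFinset v).Nonempty := ⟨u, huv⟩
          have heq := hminT v hvz hnemp
          apply Finset.mem_union_right
          refine Finset.mem_erase.2 ⟨htu, ?_⟩
          refine Finset.mem_image.2 ⟨v, ?_, heq.symm⟩
          rw [hN'v u huz]
          exact Finset.mem_erase.2 ⟨hvz, hvN⟩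
      by_cases hzN : z ∈ G.neighborFinset u
      · -- z is a neighbour of u
        have hDsub : Dset G ρ u ⊆ insert (minNbr G ρ z) (Dset G' ρ' u) := by
          intro t ht
          rcases Finset.mem_union.1 ht with h | h
          · obtain ⟨htN, hlt⟩ := Finset.mem_filter.1 h
            have htz : t ≠ z := by
              intro hc
              rw [hc] at hlt
              exact absurd hlt (not_lt.2 (le_of_lt (hρlt u huz)))
            apply Finset.mem_insert_of_mem
            apply Finset.mem_union_left
            refine Finset.mem_filter.2 ⟨?_, ?_⟩
            · rw [hN'v u huz]
              exact Finset.mem_erase.2 ⟨htz, htN⟩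
            · rw [← hρne t htz, ← hρne u huz]
              exact hlt
          · have htu : t ≠ u := (Finset.mem_erase.1 h).1
            rcases htrans t htu h with h1 | h1
            · exact Finset.mem_insert_of_mem h1
            · rw [h1]; exact Finset.mem_insert_self _ _
        have h1 := Finset.card_le_card hDsub
        have h2 := Finset.card_insert_le (minNbr G ρ z) (Dset G' ρ' u)
        have h3 := hgood' u
        have h4 : G'.degree u + 1 = G.degree u := by
          have hd1 : G'.degree u = ((G.neighborFinset u).erase z).card := by
            rw [SimpleGraph.degree, hN'v u huz]
          have hd2 := Finset.card_erase_of_mem hzN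
          have hd3 := Finset.card_pos.2 (⟨z, hzN⟩ : (G.neighborFinset u).Nonempty)
          have hd : G.degree u = (G.neighborFinset u).card := rfl
          omega
        omega
      · -- z is not a neighbour of u
        have hDsub : Dset G ρ u ⊆ Dset G' ρ' u := by
          intro t ht
          rcases Finset.mem_union.1 ht with h | h
          · obtain ⟨htN, hlt⟩ := Finset.mem_filter.1 h
            have htz : t ≠ z := fun hc => hzN (hc ▸ htN)
            apply Finset.mem_union_left
            refine Finset.mem_filter.2 ⟨?_, ?_⟩
            · rw [hN'v u huz]
              exact Finset.mem_erase.2 ⟨htz, htN⟩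
            · rw [← hρne t htz, ← hρne u huz]
              exact hlt
          · have htu : t ≠ u := (Finset.mem_erase.1 h).1
            obtain ⟨_, himg⟩ := Finset.mem_erase.1 h
            obtain ⟨v, hvN, hveq⟩ := Finset.mem_image.1 himg
            have hvz : v ≠ z := by
              intro hc
              rw [hc] at hvN
              exact hzN hvN
            have huv : u ∈ G'.neighborFinset v := by
              rw [hN'v v hvz]
              exact Finset.mem_erase.2 ⟨huz, hNsym hvN⟩
            have heqm := hminT v hvz ⟨u, huv⟩
            apply Finset.mem_union_right
            refine Finset.mem_erase.2 ⟨htu, ?_⟩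
            refine Finset.mem_image.2 ⟨v, ?_, ?_⟩
            · rw [hN'v u huz]
              exact Finset.mem_erase.2 ⟨hvz, hvN⟩
            · rw [← heqm, hveq]
        have h1 := Finset.card_le_card hDsub
        have h3 := hgood' u
        have h4 : G'.degree u = G.degree u := by
          have hd1 : G'.degree u = ((G.neighborFinset u).erase z).card := by
            rw [SimpleGraph.degree, hN'v u huz]
          rw [Finset.erase_eq_of_notMem hzN] at hd1
          exact hd1
        omega
end Order

-- Part 2 : C5
section C5
open Finset

lemma cyc5_adj_iff : ∀ v u : ZMod 5, (Cyc 5).Adj v u ↔ (u = v + 1 ∨ u = v - 1) := by decide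

lemma cyc5_adj_succ : ∀ v : ZMod 5, (Cyc 5).Adj v (v + 1) := by decide

lemma cyc5_deg : ∀ v : ZMod 5, (Cyc 5).degree v = 2 := by decide

lemma cyc5_val_edge : ∀ a b : ZMod 5, (Cyc 5).Adj a b →
    (b.val = a.val + 1 ∨ a.val = b.val + 1 ∨ (a.val = 0 ∧ b.val = 4) ∨ (a.val = 4 ∧ b.val = 0)) := by
  decide

lemma cyc5_no_chordcross : ∀ e ∈ (Cyc 5).edgeSet, ∀ f, ¬ ChordCross ZMod.val e f := by
  intro e he f hcc
  obtain ⟨a, b, c, d, rfl, rfl, h1, h2, h3⟩ := hcc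
  rw [SimpleGraph.mem_edgeSet] at he
  have hd : d.val < 5 := d.val_lt
  have := cyc5_val_edge a b he
  omega

lemma cyc5_o1p : OuterOnePlanar (Cyc 5) := by
  refine ⟨ZMod.val, ZMod.val_injective 5, ?_⟩
  intro e he f hf g hg
  exfalso
  rcases hf.2 with h | h
  · exact cyc5_no_chordcross e he f h
  · exact cyc5_no_chordcross f hf.1 e h

lemma cyc5_sharp : ∃ L : ZMod 5 → Finset ℕ, (∀ v, (L v).card = (Cyc 5).degree v + 2) ∧
    ¬ ∃ φ : ZMod 5 → ℕ, IsPCFList (Cyc 5) L φ := by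
  refine ⟨fun _ => {0, 1, 2, 3}, ?_, ?_⟩
  · intro v; rw [cyc5_deg v]; rfl
  · rintro ⟨φ, hmem, hproper, hcf⟩
    have hA : ∀ v : ZMod 5, φ v ≠ φ (v + 1) := fun v => hproper (cyc5_adj_succ v)
    have hB : ∀ v : ZMod 5, φ (v - 1) ≠ φ (v + 1) := by
      intro v heq
      obtain ⟨c, u, ⟨hadj, hc⟩, huniq⟩ := hcf v ⟨v + 1, cyc5_adj_succ v⟩
      have hadj1 : (Cyc 5).Adj v (v + 1) := cyc5_adj_succ v
      have hadj2 : (Cyc 5).Adj v (v - 1) := by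
        rw [cyc5_adj_iff]; right; rfl
      have hu : u = v + 1 ∨ u = v - 1 := (cyc5_adj_iff v u).1 hadj
      have hcval : c = φ (v + 1) := by
        rcases hu with rfl | rfl
        · exact hc.symm
        · rw [← hc, heq]
      have e1 : v + 1 = u := huniq (v + 1) ⟨hadj1, hcval.symm⟩
      have e2 : v - 1 = u := huniq (v - 1) ⟨hadj2, by rw [heq, hcval]⟩
      have : (v : ZMod 5) + 1 ≠ v - 1 := by
        intro h
        have : (2 : ZMod 5) = 0 := by linear_combination h
        exact absurd this (by decide)
      exact this (e1.trans e2.symm)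
    have hinj : Function.Injective φ := by
      intro x y hxy
      by_contra hne
      have hall : ∀ a b : ZMod 5, a ≠ b → (b = a + 1 ∨ a = b + 1 ∨ b = a + 2 ∨ a = b + 2) := by
        decide
      have hcases := hall x y hne
      have hB' : ∀ w : ZMod 5, φ w ≠ φ (w + 2) := by
        intro w
        have := hB (w + 1)
        simpa [add_sub_cancel_right, show w + 1 + 1 = w + 2 by ring, show w + 1 - 1 = w by ring] using this
      rcases hcases with rfl | rfl | rfl | rfl
      · exact hA x hxy
      · exact hA y hxy.symm
      · exact hB' x hxy
      · exact hB' y hxy.symm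
    have h5 : (Finset.univ.image φ).card = 5 := by
      rw [Finset.card_image_of_injective _ hinj]
      simp
    have hsub : Finset.univ.image φ ⊆ ({0, 1, 2, 3} : Finset ℕ) := by
      intro c hc
      obtain ⟨v, _, rfl⟩ := Finset.mem_image.1 hc
      exact hmem v
    have := Finset.card_le_card hsub
    rw [h5] at this
    norm_num at this
end C5

/-- Every outer-1-planar graph is proper conflict-free (degree+3)-choosable, and the
bound is sharp: `C₅` is outer-1-planar but not proper conflict-free
(degree+2)-choosable. -/
theorem stmt15 :
    (∀ (V : Type) [Fintype V] [DecidableEq V] (G : SimpleGraph V)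
        [DecidableRel G.Adj], OuterOnePlanar G →
      ∀ L : V → Finset ℕ, (∀ v, (L v).card = G.degree v + 3) →
        ∃ φ : V → ℕ, IsPCFList G L φ) ∧
    (OuterOnePlanar (Cyc 5) ∧
      ∃ L : ZMod 5 → Finset ℕ, (∀ v, (L v).card = (Cyc 5).degree v + 2) ∧
        ¬ ∃ φ : ZMod 5 → ℕ, IsPCFList (Cyc 5) L φ) := by
  constructor
  · intro V _ _ G instG hG L hL
    obtain ⟨ρ, hρ, hgood⟩ := order_exists (G.edgeFinset.card) G le_rfl hG
    exact greedy G ρ hρ hgood L (fun v => le_of_eq (hL v).symm)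
  · exact ⟨cyc5_o1p, cyc5_sharp⟩
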